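/- For willowtree forcing 𝕎: if W⁰ ≥₀ W¹ ≥₁ W² ≥₂ ⋯ is a sequence of willowtrees, where W ≥_i W' means W' ≤ W and the first i+1 blocks a₀,…,a_i of W (ordered by their minima) remain blocks of W', then the sequence ⟨W^i : i ∈ ω⟩ has a common lower bound in 𝕎, i.e. its 'intersection' ⟨⋃_i f_i, {a_i^{(i)} : i ∈ ω}⟩ is again a willowtree condition below every W^i. -/

import Mathlib

/-- A willowtree condition `⟨f, A⟩`: `A` is an infinite family of pairwise disjoint
nonempty finite subsets of ω (the blocks), and `f` is defined (i.e. `≠ none`) exactly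
off the union of the blocks. -/
def WTreeCond (f : ℕ → Option Bool) (A : Set (Set ℕ)) : Prop :=
  A.Infinite ∧ (∀ a ∈ A, a.Finite ∧ a.Nonempty) ∧ A.PairwiseDisjoint id ∧
    ∀ n : ℕ, f n = none ↔ n ∈ ⋃₀ A

/-- The tree `T_{⟨f,A⟩}` associated to a willowtree: all `s ∈ 2^{<ω}` respecting `f`
and constant on each block of `A` (within the length of `s`). -/
def wtree (f : ℕ → Option Bool) (A : Set (Set ℕ)) : Set (List Bool) :=
  {s | (∀ (n : ℕ) (hn : n < s.length) (b : Bool), f n = some b → s.get ⟨n, hn⟩ = b) ∧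
    ∀ a ∈ A, ∀ m ∈ a, ∀ n ∈ a, ∀ (hm : m < s.length) (hn : n < s.length),
      s.get ⟨m, hm⟩ = s.get ⟨n, hn⟩}

/-- Evaluating the canonical branch. -/
lemma WT.branch_get (h : ℕ → Bool) (L n : ℕ)
    (hn : n < (List.ofFn fun k : Fin L => h k).length) :
    (List.ofFn fun k : Fin L => h k).get ⟨n, hn⟩ = h n := by
  rw [List.get_ofFn]; rfl

/-- Any total `h : ℕ → Bool` respecting `f` and constant on the blocks gives, for every
length `L`, an element of the tree. -/
lemma WT.branch_mem (f : ℕ → Option Bool) (A : Set (Set ℕ)) (h : ℕ → Bool)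
    (hf : ∀ n b, f n = some b → h n = b)
    (hA : ∀ a ∈ A, ∀ m ∈ a, ∀ n ∈ a, h m = h n) (L : ℕ) :
    (List.ofFn fun k : Fin L => h k) ∈ wtree f A := by
  constructor
  · intro n hn b hb
    rw [WT.branch_get]; exact hf n b hb
  · intro aa haa m hm n hn hm' hn'
    rw [WT.branch_get, WT.branch_get]; exact hA aa haa m hm n hn

/-- If `⟨f₁, A₁⟩` is a condition whose tree is contained in the tree of `⟨f₀, A₀⟩`,
then every value decided by `f₀` is also decided, with the same value, by `f₁`. -/
lemma WT.step (f₀ f₁ : ℕ → Option Bool) (A₀ A₁ : Set (Set ℕ))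
    (hc : WTreeCond f₁ A₁) (hsub : wtree f₁ A₁ ⊆ wtree f₀ A₀)
    {n : ℕ} {b : Bool} (hb : f₀ n = some b) : f₁ n = some b := by
  classical
  obtain ⟨-, -, hdisj, hdom⟩ := hc
  have key : ∀ h : ℕ → Bool, (∀ m c, f₁ m = some c → h m = c) →
      (∀ aa ∈ A₁, ∀ m ∈ aa, ∀ k ∈ aa, h m = h k) → h n = b := by
    intro h hf hA
    have hmem := hsub (WT.branch_mem f₁ A₁ h hf hA (n + 1))
    have hn : n < (List.ofFn fun k : Fin (n+1) => h k).length := by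
      rw [List.length_ofFn]; omega
    have := hmem.1 n hn b hb
    rwa [WT.branch_get] at this
  cases hfn : f₁ n with
  | some b' =>
    have := key (fun k => (f₁ k).getD false)
      (fun m c hmc => by simp [hmc])
      (fun aa haa m hm k hk => by
        have h1 : f₁ m = none := (hdom m).2 ⟨aa, haa, hm⟩
        have h2 : f₁ k = none := (hdom k).2 ⟨aa, haa, hk⟩
        simp [h1, h2])
    simp only [hfn, Option.getD_some] at this
    rw [this]
  | none =>
    exfalso
    obtain ⟨bb, hbbA, hnbb⟩ := (hdom n).1 hfn
    have hval : ∀ v : Bool, v = b := by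
      intro v
      have := key (fun k => if k ∈ bb then v else (f₁ k).getD false)
        (fun m c hmc => by
          have : m ∉ bb := fun hm => by
            have : f₁ m = none := (hdom m).2 ⟨bb, hbbA, hm⟩
            rw [this] at hmc; cases hmc
          simp [this, hmc])
        (fun aa haa m hm k hk => by
          by_cases heq : aa = bb
          · subst heq; simp [hm, hk]
          · have hdj := hdisj haa hbbA (by simpa using heq)
            have hm' : m ∉ bb := fun h' => (Set.disjoint_left.1 hdj hm) h'
            have hk' : k ∉ bb := fun h' => (Set.disjoint_left.1 hdj hk) h'
            have h1 : f₁ m = none := (hdom m).2 ⟨aa, haa, hm⟩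
            have h2 : f₁ k = none := (hdom k).2 ⟨aa, haa, hk⟩
            simp [hm', hk', h1, h2])
      simpa [hnbb] using this
    exact Bool.noConfusion ((hval true).trans (hval false).symm)

/-- Fusion for willowtree forcing: if `W⁰ ≥₀ W¹ ≥₁ W² ≥₂ ⋯` is a sequence of
willowtrees `Wⁱ = ⟨f i, range (a i)⟩` (blocks `a i j` enumerated increasingly by their
minima), where `W ≥ᵢ W'` means `W' ≤ W` (inclusion of the associated trees) and the
first `i+1` blocks of `W` remain blocks of `W'`, then the sequence has a lower bound
in 𝕎, namely `⟨⋃ᵢ fᵢ, {aᵢ^{(i)} : i ∈ ω}⟩`. -/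
theorem stmt17 (f : ℕ → ℕ → Option Bool) (a : ℕ → ℕ → Set ℕ)
    (hcond : ∀ i, WTreeCond (f i) (Set.range (a i)))
    (hmono : ∀ i, ∀ j k : ℕ, j < k → sInf (a i j) < sInf (a i k))
    (hseq : ∀ i, wtree (f (i + 1)) (Set.range (a (i + 1))) ⊆
      wtree (f i) (Set.range (a i)))
    (hkeep : ∀ i, ∀ j ≤ i, a i j ∈ Set.range (a (i + 1))) :
    ∃ g : ℕ → Option Bool,
      (∀ i n b, f i n = some b → g n = some b) ∧
      WTreeCond g (Set.range fun i => a i i) ∧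
      ∀ i, wtree g (Set.range fun j => a j j) ⊆ wtree (f i) (Set.range (a i)) := by
  classical
  -- the enumeration by minima is strictly monotone, hence injective
  have smono : ∀ i, StrictMono fun j => sInf (a i j) := fun i _ _ h => hmono i _ _ h
  have sInj : ∀ i, Function.Injective (a i) := by
    intro i j k hjk
    exact (smono i).injective (by simp only [hjk])
  have sLe : ∀ i j, j ≤ sInf (a i j) := fun i j => (smono i).le_apply
  -- decided values propagate forward along the sequence
  have fstep : ∀ i n b, f i n = some b → f (i + 1) n = some b := fun i n b hb =>
    WT.step (f i) (f (i + 1)) _ _ (hcond (i + 1)) (hseq i) hb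
  have fchain : ∀ i i', i ≤ i' → ∀ n b, f i n = some b → f i' n = some b := by
    intro i i' h
    induction i', h using Nat.le_induction with
    | base => exact fun n b hb => hb
    | succ i'' hii ih => exact fun n b hb => fstep i'' n b (ih n b hb)
  have norogue : ∀ i m, f (i + 1) m = none → f i m = none := by
    intro i m h1
    cases h2 : f i m with
    | none => rfl
    | some b =>
      have := fstep i m b h2
      rw [h1] at this; cases this
  -- stabilization of the first blocks
  have stab1 : ∀ i j, j ≤ i → a (i + 1) j = a i j := by
    intro i j
    induction j using Nat.strong_induction_on with
    | _ j IH =>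
    intro hji
    obtain ⟨k, hk⟩ := hkeep i j hji
    have hkj : j ≤ k := by
      by_contra h
      push_neg at h
      have e := IH k h (by omega)
      have : a i k = a i j := by rw [← e, hk]
      have := sInj i this
      omega
    have hkj' : k ≤ j := by
      by_contra h
      push_neg at h
      obtain ⟨-, hfn1, hdisj1, hdom1⟩ := hcond (i + 1)
      obtain ⟨-, hfn0, hdisj0, hdom0⟩ := hcond i
      have hbne : (a (i + 1) j).Nonempty := (hfn1 _ ⟨j, rfl⟩).2
      have hm₀mem : sInf (a (i + 1) j) ∈ a (i + 1) j := Nat.sInf_mem hbne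
      set m₀ := sInf (a (i + 1) j) with hm₀
      have h1 : f (i + 1) m₀ = none := (hdom1 m₀).2 ⟨_, ⟨j, rfl⟩, hm₀mem⟩
      have h0 : f i m₀ = none := norogue i m₀ h1
      obtain ⟨aa, ⟨j'', rfl⟩, hmaa⟩ := (hdom0 m₀).1 h0
      rcases lt_trichotomy j'' j with hlt | heq | hgt
      · have e := IH j'' hlt (by omega)
        have hne : a (i + 1) j'' ≠ a (i + 1) j := fun he => by
          have := sInj (i + 1) he; omega
        have hdj := hdisj1 (Set.mem_range_self j'') (Set.mem_range_self j) hne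
        exact (Set.disjoint_left.1 hdj (e ▸ hmaa)) hm₀mem
      · subst heq
        have hne : a (i + 1) k ≠ a (i + 1) j'' := fun he => by
          have := sInj (i + 1) he; omega
        have hdj := hdisj1 (Set.mem_range_self k) (Set.mem_range_self j'') hne
        exact (Set.disjoint_left.1 hdj (hk ▸ hmaa)) hm₀mem
      · have l1 : sInf (a i j'') ≤ m₀ := Nat.sInf_le hmaa
        have l2 : m₀ < sInf (a (i + 1) k) := hmono (i + 1) j k h
        have l3 : sInf (a (i + 1) k) = sInf (a i j) := by rw [hk]
        have l4 : sInf (a i j) < sInf (a i j'') := hmono i j j'' hgt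
        omega
    have : k = j := le_antisymm hkj' hkj
    rw [← hk, this]
  have stab : ∀ j i i', j ≤ i → i ≤ i' → a i j = a i' j := by
    intro j i i' hj h
    induction i', h using Nat.le_induction with
    | base => rfl
    | succ i'' hii ih => rw [ih, ← stab1 i'' j (by omega)]
  have diag : ∀ j i, j ≤ i → a j j = a i j := fun j i h => stab j j i le_rfl h
  -- the diagonal function
  have fdiag : ∀ i n b, f i n = some b → f n n = some b := by
    intro i n b hb
    rcases le_or_gt i n with h | h
    · exact fchain i n h n b hb
    · cases hn : f n n with
      | some b' =>
        have h2 := fchain n i (le_of_lt h) n b' hn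
        rw [hb] at h2
        exact h2.symm
      | none =>
        exfalso
        obtain ⟨aa, ⟨j, rfl⟩, hnaa⟩ := ((hcond n).2.2.2 n).1 hn
        have hjn : j ≤ n := le_trans (sLe n j) (Nat.sInf_le hnaa)
        have e := stab j n i hjn (le_of_lt h)
        have h3 : f i n = none := ((hcond i).2.2.2 n).2 ⟨a i j, ⟨j, rfl⟩, e ▸ hnaa⟩
        rw [hb] at h3; cases h3
  -- injectivity of the diagonal blocks
  have dinj : Function.Injective fun i => a i i := by
    intro i j he
    simp only at he
    by_contra hne
    rcases lt_or_gt_of_ne hne with h | h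
    · have e := diag i j (le_of_lt h)
      have : a j i = a j j := by rw [← e, he]
      have := sInj j this; omega
    · have e := diag j i (le_of_lt h)
      have : a i j = a i i := by rw [← e, ← he]
      have := sInj i this; omega
  refine ⟨fun n => f n n, fun i n b hb => fdiag i n b hb, ⟨?_, ?_, ?_, ?_⟩, ?_⟩
  · -- infinite
    exact Set.infinite_range_of_injective dinj
  · -- finite and nonempty
    rintro aa ⟨i, rfl⟩
    exact (hcond i).2.1 _ ⟨i, rfl⟩
  · -- pairwise disjoint
    rintro x ⟨i, rfl⟩ y ⟨j, rfl⟩ hne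
    simp only [id] at *
    rcases lt_trichotomy i j with h | h | h
    · have e := diag i j (le_of_lt h)
      have hne' : a j i ≠ a j j := fun he => by have := sInj j he; omega
      have := (hcond j).2.2.1 (Set.mem_range_self i) (Set.mem_range_self j) hne'
      simpa [← e] using this
    · exact absurd (by rw [h]) hne
    · have e := diag j i (le_of_lt h)
      have hne' : a i i ≠ a i j := fun he => by have := sInj i he; omega
      have := (hcond i).2.2.1 (Set.mem_range_self i) (Set.mem_range_self j) hne'
      simpa [← e] using this
  · -- domain condition
    intro n
    constructor
    · intro hn
      obtain ⟨aa, ⟨j, rfl⟩, hnaa⟩ := ((hcond n).2.2.2 n).1 hn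
      have hjn : j ≤ n := le_trans (sLe n j) (Nat.sInf_le hnaa)
      have e := diag j n hjn
      exact ⟨a j j, ⟨j, rfl⟩, e ▸ hnaa⟩
    · rintro ⟨aa, ⟨j, rfl⟩, hnaa⟩
      simp only at hnaa
      rcases le_or_gt j n with h | h
      · have e := diag j n h
        exact ((hcond n).2.2.2 n).2 ⟨a n j, ⟨j, rfl⟩, e ▸ hnaa⟩
      · cases hn : f n n with
        | none => exact hn
        | some b =>
          exfalso
          have h2 := fchain n j (le_of_lt h) n b hn
          have h3 : f j n = none := ((hcond j).2.2.2 n).2 ⟨a j j, ⟨j, rfl⟩, hnaa⟩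
          rw [h3] at h2; cases h2
  · -- lower bound
    have chainT : ∀ i i', i ≤ i' →
        wtree (f i') (Set.range (a i')) ⊆ wtree (f i) (Set.range (a i)) := by
      intro i i' h
      induction i', h using Nat.le_induction with
      | base => exact subset_rfl
      | succ i'' hii ih => exact fun s hs => ih (hseq i'' hs)
    intro i s hs
    have key : s ∈ wtree (f (max i s.length)) (Set.range (a (max i s.length))) := by
      set I := max i s.length with hI
      constructor
      · intro n hn b hb
        have hnb : f n n = some b := fdiag I n b hb
        exact hs.1 n hn b hnb
      · rintro aa ⟨j, rfl⟩ m hm n hn hm' hn'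
        have hjI : j ≤ I := by
          have h1 : j ≤ sInf (a I j) := sLe I j
          have h2 : sInf (a I j) ≤ m := Nat.sInf_le hm
          have h3 : s.length ≤ I := le_max_right _ _
          omega
        have e := diag j I hjI
        exact hs.2 (a j j) ⟨j, rfl⟩ m (e ▸ hm) n (e ▸ hn) hm' hn'
    exact chainT i (max i s.length) (le_max_left _ _) key
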